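/- Let φ be smooth exponentially concave on Δₙ such that the Euclidean Hessian of Φ = e^φ is strictly negative definite. Then for any tangent vector v to Δₙ at p (i.e., v ∈ ℝⁿ with Σ vᵢ = 0), the second derivative of t ↦ T(p + tv | p) at t = 0 equals v^⊤(−Hess φ(p) − ∇φ(p)∇φ(p)^⊤)v = v^⊤(−Hess Φ(p)/Φ(p))v, and this quantity is strictly positive for v ≠ 0. -/

import Mathlib

open Real Finset

/-- The open unit simplex in ℝⁿ. -/
def openSimplex (n : ℕ) : Set (Fin n → ℝ) :=
  {p | (∀ i, 0 < p i) ∧ ∑ i, p i = 1}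

/-- For smooth exponentially concave `φ` with strictly negative definite Hessian of
`Φ = e^φ` on tangent directions, and any tangent vector `v` at `p ∈ Δₙ` (`Σ vᵢ = 0`),
the second derivative of `t ↦ T(p + tv | p)` at `t = 0` equals
`vᵀ(−Hess φ(p) − ∇φ(p)∇φ(p)ᵀ)v = vᵀ(−Hess Φ(p)/Φ(p))v`, and is positive for `v ≠ 0`.
Here `g`, `Hφ`, `HΦ` are the gradient of `φ` and the Hessians of `φ` and `Φ`. -/
theorem L_divergence_second_derivative (n : ℕ) (φf : (Fin n → ℝ) → ℝ)
    (g : (Fin n → ℝ) → (Fin n → ℝ))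
    (Hφ HΦ : (Fin n → ℝ) → Matrix (Fin n) (Fin n) ℝ)
    (hconc : ConcaveOn ℝ (openSimplex n) (fun p => Real.exp (φf p)))
    (hsm : ∀ p ∈ openSimplex n, ∀ v : Fin n → ℝ, ∑ i, v i = 0 →
      ContDiff ℝ 2 (fun t : ℝ => φf (p + t • v)))
    (hg : ∀ p ∈ openSimplex n, ∀ v : Fin n → ℝ, ∑ i, v i = 0 →
      HasDerivAt (fun t : ℝ => φf (p + t • v)) (∑ i, g p i * v i) 0)
    (hH : ∀ p ∈ openSimplex n, ∀ v : Fin n → ℝ, ∑ i, v i = 0 →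
      iteratedDeriv 2 (fun t : ℝ => φf (p + t • v)) 0 = ∑ i, ∑ j, v i * Hφ p i j * v j)
    (hHΦ : ∀ p ∈ openSimplex n, ∀ v : Fin n → ℝ, ∑ i, v i = 0 →
      iteratedDeriv 2 (fun t : ℝ => Real.exp (φf (p + t • v))) 0
        = ∑ i, ∑ j, v i * HΦ p i j * v j)
    (hneg : ∀ p ∈ openSimplex n, ∀ v : Fin n → ℝ, ∑ i, v i = 0 → v ≠ 0 →
      ∑ i, ∑ j, v i * HΦ p i j * v j < 0) :
    ∀ p ∈ openSimplex n, ∀ v : Fin n → ℝ, ∑ i, v i = 0 →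
      iteratedDeriv 2 (fun t : ℝ =>
          Real.log (1 + ∑ i, g p i * ((p + t • v) i - p i)) - (φf (p + t • v) - φf p)) 0
        = ∑ i, ∑ j, v i * (-(Hφ p i j)) * v j - (∑ i, g p i * v i) ^ 2 ∧
      ∑ i, ∑ j, v i * (-(Hφ p i j)) * v j - (∑ i, g p i * v i) ^ 2
        = -(∑ i, ∑ j, v i * HΦ p i j * v j) / Real.exp (φf p) ∧
      (v ≠ 0 →
        0 < ∑ i, ∑ j, v i * (-(Hφ p i j)) * v j - (∑ i, g p i * v i) ^ 2) := by
  intro p hp v hv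
  set S := ∑ i, g p i * v i with hS
  set ψ := fun t : ℝ => φf (p + t • v) with hψ
  have hC : ContDiff ℝ 2 ψ := hsm p hp v hv
  have hC2 : ContDiff ℝ ((1 : ℕ∞) + 1) ψ := by exact_mod_cast hC
  have hd1 : Differentiable ℝ ψ := hC.differentiable (by norm_num)
  have hd2 : Differentiable ℝ (deriv ψ) :=
    ((contDiff_succ_iff_deriv).mp hC2).2.2.differentiable (by norm_num)
  have hψ0 : ψ 0 = φf p := by simp [hψ]
  have hder0 : deriv ψ 0 = S := (hg p hp v hv).deriv
  set A := iteratedDeriv 2 ψ 0 with hA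
  have hAeq : A = ∑ i, ∑ j, v i * Hφ p i j * v j := hH p hp v hv
  have hit2 : ∀ f : ℝ → ℝ, iteratedDeriv 2 f 0 = deriv (deriv f) 0 := by
    intro f; rw [iteratedDeriv_succ, iteratedDeriv_one]
  -- sum rewriting
  have hsum : ∀ t : ℝ, (1 + ∑ i, g p i * ((p + t • v) i - p i)) = 1 + t * S := by
    intro t
    congr 1
    rw [hS, Finset.mul_sum]
    apply Finset.sum_congr rfl
    intro i _
    simp [Pi.add_apply, Pi.smul_apply, smul_eq_mul]; ring
  have hFeq : (fun t : ℝ =>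
      Real.log (1 + ∑ i, g p i * ((p + t • v) i - p i)) - (φf (p + t • v) - φf p)) =
      fun t => Real.log (1 + t * S) - (ψ t - ψ 0) := by
    funext t; rw [hsum t, hψ0]
  -- neighborhood where 1 + t*S > 0
  have hnb : ∀ᶠ t in nhds (0:ℝ), 0 < 1 + t * S := by
    have : ContinuousAt (fun t : ℝ => 1 + t * S) 0 := by fun_prop
    have h0 : (0:ℝ) < (fun t : ℝ => 1 + t * S) 0 := by norm_num
    exact this.eventually (eventually_gt_nhds h0)
  -- derivative of F near 0
  have hderF : deriv (fun s => Real.log (1 + s * S) - (ψ s - ψ 0)) =ᶠ[nhds (0:ℝ)]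
      fun t => S / (1 + t * S) - deriv ψ t := by
    filter_upwards [hnb] with t ht
    have h1 : HasDerivAt (fun s : ℝ => 1 + s * S) S t := by
      simpa using ((hasDerivAt_id t).mul_const S).const_add 1
    have h2 : HasDerivAt (fun s : ℝ => Real.log (1 + s * S)) (S / (1 + t * S)) t :=
      h1.log (ne_of_gt ht)
    have h3 : HasDerivAt (fun s => ψ s - ψ 0) (deriv ψ t) t :=
      ((hd1 t).hasDerivAt).sub_const (ψ 0)
    exact (h2.sub h3).deriv
  have hG : HasDerivAt (fun t : ℝ => S / (1 + t * S)) (-(S^2)) 0 := by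
    have h1 : HasDerivAt (fun s : ℝ => 1 + s * S) S 0 := by
      simpa using ((hasDerivAt_id (0:ℝ)).mul_const S).const_add 1
    have h : HasDerivAt (fun t : ℝ => S / (1 + t * S)) _ 0 := (hasDerivAt_const (0:ℝ) S).div h1 (by norm_num)
    convert h using 1
    norm_num
    ring
  have hψ' : HasDerivAt (deriv ψ) A 0 := by
    have h := (hd2 0).hasDerivAt
    rwa [hA, hit2 ψ]
  have hF2 : iteratedDeriv 2 (fun t => Real.log (1 + t * S) - (ψ t - ψ 0)) 0
      = -(S^2) - A := by
    rw [hit2, hderF.deriv_eq]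
    exact (hG.sub hψ').deriv
  -- second derivative of exp ∘ ψ
  have hexp : deriv (fun t => Real.exp (ψ t)) = fun t => Real.exp (ψ t) * deriv ψ t := by
    funext t; exact ((hd1 t).hasDerivAt.exp).deriv
  have hB : (∑ i, ∑ j, v i * HΦ p i j * v j) = Real.exp (φf p) * (A + S^2) := by
    rw [← hHΦ p hp v hv]
    have heq : (fun t : ℝ => Real.exp (φf (p + t • v))) = fun t => Real.exp (ψ t) := rfl
    rw [heq, hit2, hexp]
    have h1 : HasDerivAt (fun t => Real.exp (ψ t)) (Real.exp (ψ 0) * S) 0 := (hg p hp v hv).exp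
    have : deriv (fun t => Real.exp (ψ t) * deriv ψ t) 0 = _ := (h1.mul hψ').deriv
    rw [this, hder0, hψ0]
    ring
  -- sum with negated Hessian
  have hnegsum : ∑ i, ∑ j, v i * (-(Hφ p i j)) * v j = -A := by
    rw [hAeq, ← Finset.sum_neg_distrib]
    apply Finset.sum_congr rfl
    intro i _
    rw [← Finset.sum_neg_distrib]
    apply Finset.sum_congr rfl
    intro j _
    ring
  refine ⟨?_, ?_, ?_⟩
  · rw [hFeq, hF2, hnegsum]; ring
  · rw [hnegsum, hB]
    field_simp
    ring
  · intro hv0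
    have hlt := hneg p hp v hv hv0
    rw [hnegsum]
    rw [hB] at hlt
    nlinarith [Real.exp_pos (φf p)]
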